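/- The Fourier transform of the Lusin wavelet ψ(x) = 1/(π (x+i)²) is given by ψ̂(ξ) = −2ξ e^{−ξ} for ξ ≥ 0 and ψ̂(ξ) = 0 for ξ < 0, where ψ̂(ξ) = ∫_ℝ e^{−ixξ} ψ(x) dx. -/

import Mathlib

open Real Complex MeasureTheory
open scoped FourierTransform

lemma keyInt {c : ℂ} (hc : 0 < c.re) :
    IntegrableOn (fun t : ℝ => (t : ℂ) * Complex.exp (-(c * t))) (Set.Ioi 0) := by
  have hbase := integrableOn_rpow_mul_exp_neg_mul_rpow
    (by norm_num : (-1:ℝ) < 1) (one_pos (α := ℝ)) hc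
  refine Integrable.mono' hbase ?_ ?_
  · exact (Continuous.mul (by fun_prop) (by fun_prop)).aestronglyMeasurable
  · refine (ae_restrict_iff' measurableSet_Ioi).mpr (ae_of_all _ fun t ht => ?_)
    have ht' : (0:ℝ) < t := ht
    rw [norm_mul, Complex.norm_exp,
      Complex.norm_real, Real.norm_eq_abs, _root_.abs_of_pos ht', Real.rpow_one]
    have : (-(c * (t:ℂ))).re = -c.re * t := by simp [Complex.mul_re]
    rw [this]

lemma key {c : ℂ} (hc : 0 < c.re) :
    ∫ t in Set.Ioi (0:ℝ), (t : ℂ) * Complex.exp (-(c * t)) = 1 / c ^ 2 := by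
  have hc0 : c ≠ 0 := fun h => by simp [h] at hc
  set F : ℝ → ℂ := fun t => -(((t : ℂ) / c + 1 / c ^ 2) * Complex.exp (-(c * t))) with hF
  have hderiv : ∀ t ∈ Set.Ioi (0:ℝ), HasDerivAt F ((t : ℂ) * Complex.exp (-(c * t))) t := by
    intro t _
    have hid : HasDerivAt (fun s : ℝ => (s : ℂ)) 1 t := by
      simpa using (hasDerivAt_id t).ofReal_comp
    have hexp : HasDerivAt (fun s : ℝ => Complex.exp (-(c * s))) (-(c * Complex.exp (-(c * t)))) t := by
      have := ((hid.const_mul c).neg).cexp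
      simpa [mul_comm] using this
    have hG := (((hid.div_const c).add_const (1 / c ^ 2)).mul hexp).neg
    convert hG using 1
    · rfl
    case e'_8 => rfl
    field_simp
    ring
  have hlim : Filter.Tendsto F Filter.atTop (nhds 0) := by
    rw [tendsto_zero_iff_norm_tendsto_zero]
    set A := ‖(1 / c : ℂ)‖ with hA
    set B := ‖(1 / c ^ 2 : ℂ)‖ with hB
    have hbnd : ∀ t : ℝ, 0 ≤ t →
        ‖F t‖ ≤ A * (t * Real.exp (-(c.re * t))) + B * Real.exp (-(c.re * t)) := by
      intro t ht
      rw [hF]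
      simp only [norm_neg, norm_mul, Complex.norm_exp]
      have hre : (-(c * (t:ℂ))).re = -(c.re * t) := by simp [Complex.mul_re]
      rw [hre]
      have habs : ‖(t:ℂ)/c + 1/c^2‖ ≤ A * t + B := by
        refine (norm_add_le _ _).trans ?_
        apply add_le_add
        · refine le_of_eq ?_
          rw [hA, norm_div, norm_div, norm_one, Complex.norm_real, Real.norm_eq_abs,
            _root_.abs_of_nonneg ht]
          ring
        · exact le_of_eq rfl
      calc ‖(t:ℂ)/c + 1/c^2‖ * Real.exp (-(c.re * t))
          ≤ (A * t + B) * Real.exp (-(c.re * t)) := by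
            gcongr
        _ = _ := by ring
    have h0 : Filter.Tendsto (fun t : ℝ => (c.re * t) * Real.exp (-(c.re * t)))
        Filter.atTop (nhds 0) := by
      have := (tendsto_pow_mul_exp_neg_atTop_nhds_zero 1).comp
        (Filter.tendsto_id.const_mul_atTop hc)
      simpa [Function.comp_def] using this
    have h1 : Filter.Tendsto (fun t : ℝ => t * Real.exp (-(c.re * t))) Filter.atTop (nhds 0) := by
      refine Filter.Tendsto.congr ?_ (by simpa using h0.const_mul c.re⁻¹)
      intro t
      field_simp
    have h2 : Filter.Tendsto (fun t : ℝ => Real.exp (-(c.re * t))) Filter.atTop (nhds 0) :=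
      Real.tendsto_exp_neg_atTop_nhds_zero.comp (Filter.tendsto_id.const_mul_atTop hc)
    have hmaj := (h1.const_mul A).add (h2.const_mul B)
    simp only [mul_zero, add_zero] at hmaj
    refine squeeze_zero' ?_ ?_ hmaj
    · exact Filter.Eventually.of_forall fun t => norm_nonneg _
    · filter_upwards [Filter.eventually_ge_atTop 0] with t ht using hbnd t ht
  have hcont : ContinuousWithinAt F (Set.Ici 0) 0 := by
    apply Continuous.continuousWithinAt
    fun_prop
  have := integral_Ioi_of_hasDerivAt_of_tendsto hcont hderiv (keyInt hc) hlim
  rw [this, hF]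
  simp

noncomputable def lusin (x : ℝ) : ℂ := 1 / (Real.pi * ((x : ℂ) + Complex.I) ^ 2)

noncomputable def Haux (w : ℝ) : ℂ :=
  ((-4 * π * max w 0 : ℝ) : ℂ) * Complex.exp ((-(2 * π * max w 0) : ℝ) : ℂ)

lemma Haux_cont : Continuous Haux := by unfold Haux; fun_prop

lemma Haux_eq_indicator (x : ℝ) :
    (fun ξ : ℝ => Complex.exp (((-2 * π * ξ * x : ℝ) : ℂ) * Complex.I) • Haux ξ)
      = Set.indicator (Set.Ioi 0)
        (fun ξ : ℝ => (-4 * (π : ℂ)) * ((ξ : ℂ) *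
          Complex.exp (-((2 * π + 2 * π * x * Complex.I) * ξ)))) := by
  ext ξ
  by_cases h : 0 < ξ
  · rw [Set.indicator_of_mem (Set.mem_Ioi.mpr h)]
    unfold Haux
    rw [max_eq_left h.le, smul_eq_mul]
    have harg : ((-2 * π * ξ * x : ℝ) : ℂ) * Complex.I + ((-(2 * π * ξ) : ℝ) : ℂ)
        = -((2 * π + 2 * π * x * Complex.I) * ξ) := by push_cast; ring
    calc Complex.exp (((-2 * π * ξ * x : ℝ) : ℂ) * Complex.I) *
          (((-4 * π * ξ : ℝ) : ℂ) * Complex.exp ((-(2 * π * ξ) : ℝ) : ℂ))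
        = ((-4 * π * ξ : ℝ) : ℂ) *
          Complex.exp (((-2 * π * ξ * x : ℝ) : ℂ) * Complex.I + ((-(2 * π * ξ) : ℝ) : ℂ)) := by
          rw [Complex.exp_add]; ring
      _ = _ := by rw [harg]; push_cast; ring
  · rw [Set.indicator_of_notMem (by simpa using h)]
    unfold Haux
    rw [max_eq_right (not_lt.mp h)]
    simp

lemma fourierHaux (x : ℝ) : 𝓕 Haux x = lusin (-x) := by
  rw [Real.fourier_real_eq_integral_exp_smul]
  have : (fun v : ℝ => Complex.exp (((-2 * π * v * x : ℝ) : ℂ) * Complex.I) • Haux v)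
      = Set.indicator (Set.Ioi 0)
        (fun ξ : ℝ => (-4 * (π : ℂ)) * ((ξ : ℂ) *
          Complex.exp (-((2 * π + 2 * π * x * Complex.I) * ξ)))) := Haux_eq_indicator x
  rw [this, integral_indicator measurableSet_Ioi, MeasureTheory.integral_const_mul]
  have hc : (0:ℝ) < (2 * (π:ℂ) + 2 * π * x * Complex.I).re := by
    simp [Real.pi_pos]
  rw [key hc]
  unfold lusin
  have hz : ((-x : ℝ) : ℂ) + Complex.I ≠ 0 := by
    intro h
    simpa using congrArg Complex.im h
  have hπ : (π : ℂ) ≠ 0 := Complex.ofReal_ne_zero.mpr Real.pi_ne_zero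
  have hcz : 2 * (π:ℂ) + 2 * π * x * Complex.I
      = -(2 * π * Complex.I) * (((-x : ℝ) : ℂ) + Complex.I) := by
    push_cast
    linear_combination (2 * (π:ℂ)) * Complex.I_sq
  rw [hcz, mul_pow]
  have hI2 : (-(2 * (π:ℂ) * Complex.I)) ^ 2 = -(4 * π ^ 2) := by
    linear_combination (4 * (π:ℂ)^2) * Complex.I_sq
  rw [hI2]
  set w := (((-x : ℝ) : ℂ) + Complex.I) ^ 2 with hw
  have hw0 : w ≠ 0 := pow_ne_zero _ hz
  field_simp

lemma Haux_int : Integrable Haux := by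
  have h : Haux = (fun ξ : ℝ => Complex.exp (((-2 * π * ξ * (0:ℝ) : ℝ) : ℂ) * Complex.I) • Haux ξ) := by
    ext ξ; simp
  rw [h, Haux_eq_indicator 0]
  rw [integrable_indicator_iff measurableSet_Ioi]
  have hc : (0:ℝ) < (2 * (π:ℂ) + 2 * π * (0:ℝ) * Complex.I).re := by simp [Real.pi_pos]
  exact (keyInt hc).const_mul _

lemma lusin_int : Integrable lusin := by
  have hcont : Continuous lusin := by
    unfold lusin
    apply Continuous.div continuous_const
    · fun_prop
    · intro x
      apply mul_ne_zero (Complex.ofReal_ne_zero.mpr Real.pi_ne_zero)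
      apply pow_ne_zero
      intro h
      simpa using congrArg Complex.im h
  refine Integrable.mono' ((integrable_inv_one_add_sq).const_mul π⁻¹) hcont.aestronglyMeasurable
    (ae_of_all _ fun x => ?_)
  have hz2 : ‖((x:ℂ) + Complex.I)‖ ^ 2 = x ^ 2 + 1 := by
    rw [Complex.sq_norm, Complex.normSq_apply]
    simp
    ring
  unfold lusin
  rw [norm_div, norm_one, norm_mul, norm_pow, Complex.norm_real, Real.norm_eq_abs,
    _root_.abs_of_pos Real.pi_pos, hz2]
  rw [one_div, mul_inv, add_comm]

lemma fourierHaux_int : Integrable (𝓕 Haux) := by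
  have : 𝓕 Haux = fun x => lusin (-x) := funext fourierHaux
  rw [this]
  exact lusin_int.comp_neg

lemma fourier_lusin : 𝓕 lusin = Haux := by
  have hinv : 𝓕⁻ Haux = lusin := by
    ext x
    rw [Real.fourierInv_eq_fourier_neg, fourierHaux, neg_neg]
  rw [← hinv]
  exact Continuous.fourier_fourierInv_eq Haux_cont Haux_int fourierHaux_int

theorem stmt_13 :
    ∀ ξ : ℝ, (∫ x : ℝ, Complex.exp (-Complex.I * x * ξ) * lusin x) =
      if 0 ≤ ξ then -2 * ξ * Complex.exp (-ξ) else 0 := by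
  intro ξ
  have h1 : (∫ x : ℝ, Complex.exp (-Complex.I * x * ξ) * lusin x) = 𝓕 lusin (ξ / (2 * π)) := by
    rw [Real.fourier_real_eq_integral_exp_smul]
    congr 1
    ext x
    rw [smul_eq_mul]
    congr 2
    have hπ : (π:ℂ) ≠ 0 := Complex.ofReal_ne_zero.mpr Real.pi_ne_zero
    push_cast
    field_simp
  rw [h1, fourier_lusin]
  unfold Haux
  by_cases h : 0 ≤ ξ
  · rw [if_pos h]
    rw [max_eq_left (by positivity)]
    have h2 : 2 * π * (ξ / (2 * π)) = ξ := by field_simp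
    have h4 : -4 * π * (ξ / (2 * π)) = -2 * ξ := by field_simp; ring
    rw [h2, h4]
    push_cast
    ring
  · rw [if_neg h]
    push_neg at h
    rw [max_eq_right (by
      apply le_of_lt
      exact div_neg_of_neg_of_pos h (by positivity))]
    simp
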